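/- Let a > 0 and let M(v) = exp(−v²/(2a²))/√(2πa²) be the Gaussian with variance a². For real constants α, β let f(v) = (α + β v)·M(v), and set ρ⁺ = ∫₀^∞ f(v) dv and q⁺ = ∫₀^∞ v f(v) dv. Then ρ⁺ = α/2 + (a/√(2π))·β, q⁺ = (a/√(2π))·α + (a²/2)·β, and ∫₀^∞ v² f(v) dv = ((π − 4)·a²·ρ⁺ + a·√(2π)·q⁺)/(π − 2). -/

import Mathlib

open Real MeasureTheory Set Filter Asymptotics

lemma gbk_tendsto {b : ℝ} (hb : 0 < b) (n : ℕ) :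
    Tendsto (fun v : ℝ => v ^ n * Real.exp (-b * v ^ 2)) atTop (nhds 0) := by
  have h := rpow_mul_exp_neg_mul_sq_isLittleO_exp_neg hb (n : ℝ)
  simp_rw [Real.rpow_natCast] at h
  have h2 : Tendsto (fun x : ℝ => Real.exp (-(1/2) * x)) atTop (nhds 0) := by
    apply Real.tendsto_exp_atBot.comp
    exact (tendsto_const_mul_atBot_of_neg (by norm_num)).mpr tendsto_id
  exact h.tendsto_zero_of_tendsto h2

lemma gbk_integrable {b : ℝ} (hb : 0 < b) (n : ℕ) :
    IntegrableOn (fun v : ℝ => v ^ n * Real.exp (-b * v ^ 2)) (Ioi 0) := by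
  have := integrableOn_rpow_mul_exp_neg_mul_sq hb (s := (n : ℝ))
    (lt_of_lt_of_le neg_one_lt_zero (Nat.cast_nonneg n))
  simpa [Real.rpow_natCast] using this

lemma gbk_mom0 {b : ℝ} (hb : 0 < b) :
    ∫ v in Ioi (0:ℝ), Real.exp (-b * v ^ 2) = Real.sqrt (π / b) / 2 :=
  integral_gaussian_Ioi b

lemma gbk_mom1 {b : ℝ} (hb : 0 < b) :
    ∫ v in Ioi (0:ℝ), v * Real.exp (-b * v ^ 2) = 1 / (2 * b) := by
  have hderiv : ∀ v ∈ Ici (0:ℝ), HasDerivAt (fun v : ℝ => -Real.exp (-b * v ^ 2) / (2 * b))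
      (v * Real.exp (-b * v ^ 2)) v := by
    intro v _
    have h : HasDerivAt (fun v : ℝ => Real.exp (-b * v ^ 2))
        (Real.exp (-b * v ^ 2) * (-b * (2 * v ^ 1))) v :=
      ((hasDerivAt_pow 2 v).const_mul (-b)).exp
    have := (h.neg).div_const (2 * b)
    refine this.congr_deriv ?_
    field_simp [hb.ne']
  have htend : Tendsto (fun v : ℝ => -Real.exp (-b * v ^ 2) / (2 * b)) atTop (nhds 0) := by
    have := (gbk_tendsto hb 0).neg.div_const (2 * b)
    simpa using this
  have hint : IntegrableOn (fun v : ℝ => v * Real.exp (-b * v ^ 2)) (Ioi 0) := by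
    simpa using gbk_integrable hb 1
  have := integral_Ioi_of_hasDerivAt_of_tendsto' hderiv hint htend
  simp only [neg_mul] at this ⊢
  simp at this
  rw [this]
  field_simp

lemma gbk_mom2 {b : ℝ} (hb : 0 < b) :
    ∫ v in Ioi (0:ℝ), v ^ 2 * Real.exp (-b * v ^ 2) = Real.sqrt (π / b) / (4 * b) := by
  have hderiv : ∀ v ∈ Ici (0:ℝ), HasDerivAt (fun v : ℝ => -v * Real.exp (-b * v ^ 2) / (2 * b))
      (v ^ 2 * Real.exp (-b * v ^ 2) - Real.exp (-b * v ^ 2) / (2 * b)) v := by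
    intro v _
    have h : HasDerivAt (fun v : ℝ => Real.exp (-b * v ^ 2))
        (Real.exp (-b * v ^ 2) * (-b * (2 * v ^ 1))) v :=
      ((hasDerivAt_pow 2 v).const_mul (-b)).exp
    have := (((hasDerivAt_id v).neg.mul h)).div_const (2 * b)
    refine this.congr_deriv ?_
    simp only [Pi.neg_apply, id]
    field_simp
    ring
  have htend : Tendsto (fun v : ℝ => -v * Real.exp (-b * v ^ 2) / (2 * b)) atTop (nhds 0) := by
    have := (gbk_tendsto hb 1).neg.div_const (2 * b)
    simpa [neg_mul] using this
  have hint2 : IntegrableOn (fun v : ℝ => v ^ 2 * Real.exp (-b * v ^ 2)) (Ioi 0) :=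
    gbk_integrable hb 2
  have hint0 : IntegrableOn (fun v : ℝ => Real.exp (-b * v ^ 2)) (Ioi 0) := by
    simpa using gbk_integrable hb 0
  have hint : IntegrableOn
      (fun v : ℝ => v ^ 2 * Real.exp (-b * v ^ 2) - Real.exp (-b * v ^ 2) / (2 * b)) (Ioi 0) :=
    hint2.sub (hint0.div_const (2 * b))
  have key := integral_Ioi_of_hasDerivAt_of_tendsto' hderiv hint htend
  rw [MeasureTheory.integral_sub hint2 (hint0.div_const (2 * b))] at key
  have h0 : (∫ v in Ioi (0:ℝ), Real.exp (-b * v ^ 2) / (2 * b))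
      = Real.sqrt (π / b) / 2 / (2 * b) := by
    rw [MeasureTheory.integral_div, gbk_mom0 hb]
  rw [h0] at key
  simp at key
  have hb' : (2 : ℝ) * b ≠ 0 := by positivity
  field_simp at key ⊢
  ring_nf at key ⊢
  linarith

lemma gbk_mom3 {b : ℝ} (hb : 0 < b) :
    ∫ v in Ioi (0:ℝ), v ^ 3 * Real.exp (-b * v ^ 2) = 1 / (2 * b ^ 2) := by
  have hderiv : ∀ v ∈ Ici (0:ℝ), HasDerivAt (fun v : ℝ => -v ^ 2 * Real.exp (-b * v ^ 2) / (2 * b))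
      (v ^ 3 * Real.exp (-b * v ^ 2) - v * Real.exp (-b * v ^ 2) / b) v := by
    intro v _
    have h : HasDerivAt (fun v : ℝ => Real.exp (-b * v ^ 2))
        (Real.exp (-b * v ^ 2) * (-b * (2 * v ^ 1))) v :=
      ((hasDerivAt_pow 2 v).const_mul (-b)).exp
    have := (((hasDerivAt_pow 2 v).neg.mul h)).div_const (2 * b)
    refine this.congr_deriv ?_
    simp only [Pi.neg_apply, id]
    field_simp
    ring
  have htend : Tendsto (fun v : ℝ => -v ^ 2 * Real.exp (-b * v ^ 2) / (2 * b)) atTop (nhds 0) := by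
    have := (gbk_tendsto hb 2).neg.div_const (2 * b)
    simpa [neg_mul] using this
  have hint3 : IntegrableOn (fun v : ℝ => v ^ 3 * Real.exp (-b * v ^ 2)) (Ioi 0) :=
    gbk_integrable hb 3
  have hint1 : IntegrableOn (fun v : ℝ => v * Real.exp (-b * v ^ 2)) (Ioi 0) := by
    simpa using gbk_integrable hb 1
  have hint : IntegrableOn
      (fun v : ℝ => v ^ 3 * Real.exp (-b * v ^ 2) - v * Real.exp (-b * v ^ 2) / b) (Ioi 0) :=
    hint3.sub (hint1.div_const b)
  have key := integral_Ioi_of_hasDerivAt_of_tendsto' hderiv hint htend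
  rw [MeasureTheory.integral_sub hint3 (hint1.div_const b)] at key
  have h1 : (∫ v in Ioi (0:ℝ), v * Real.exp (-b * v ^ 2) / b) = 1 / (2 * b) / b := by
    rw [MeasureTheory.integral_div, gbk_mom1 hb]
  rw [h1] at key
  simp at key
  have hb' : b ≠ 0 := ne_of_gt hb
  field_simp at key ⊢
  ring_nf at key ⊢
  linarith

/-- Half-moment closure identity for the Gaussian BGK model with unbounded
velocity space. -/
theorem halfmoment_closure_gaussian (a : ℝ) (ha : 0 < a) (α β : ℝ)
    (M : ℝ → ℝ)
    (hM : M = fun v => Real.exp (-v ^ 2 / (2 * a ^ 2)) / Real.sqrt (2 * Real.pi * a ^ 2))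
    (f : ℝ → ℝ) (hf : f = fun v => (α + β * v) * M v)
    (ρp qp : ℝ)
    (hρp : ρp = ∫ v in Set.Ioi (0:ℝ), f v)
    (hqp : qp = ∫ v in Set.Ioi (0:ℝ), v * f v) :
    ρp = α / 2 + (a / Real.sqrt (2 * Real.pi)) * β ∧
    qp = (a / Real.sqrt (2 * Real.pi)) * α + (a ^ 2 / 2) * β ∧
    (∫ v in Set.Ioi (0:ℝ), v ^ 2 * f v) =
      ((Real.pi - 4) * a ^ 2 * ρp + a * Real.sqrt (2 * Real.pi) * qp) /
        (Real.pi - 2) := by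
  set b : ℝ := 1 / (2 * a ^ 2) with hb_def
  have hb : 0 < b := by positivity
  have hexp : ∀ v : ℝ, Real.exp (-v ^ 2 / (2 * a ^ 2)) = Real.exp (-b * v ^ 2) := by
    intro v; congr 1; rw [hb_def]; field_simp
  set c : ℝ := Real.sqrt (2 * Real.pi * a ^ 2) with hc_def
  have hc_pos : 0 < c := by
    rw [hc_def]; apply Real.sqrt_pos.mpr; positivity
  have hc_eq : c = a * Real.sqrt (2 * Real.pi) := by
    rw [hc_def, show 2 * Real.pi * a ^ 2 = (2 * Real.pi) * a ^ 2 by ring,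
      Real.sqrt_mul (by positivity), Real.sqrt_sq ha.le]; ring
  have hsqrtb : Real.sqrt (π / b) = c := by
    rw [hc_def]; congr 1; rw [hb_def]; field_simp
  -- rewrite f
  have hf' : ∀ v : ℝ, f v = (α / c) * Real.exp (-b * v ^ 2) + (β / c) * (v * Real.exp (-b * v ^ 2)) := by
    intro v
    rw [hf, hM]
    simp only
    rw [hexp v]
    field_simp
  have hint0 : IntegrableOn (fun v : ℝ => Real.exp (-b * v ^ 2)) (Ioi 0) := by
    simpa using gbk_integrable hb 0
  have hint1 : IntegrableOn (fun v : ℝ => v * Real.exp (-b * v ^ 2)) (Ioi 0) := by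
    simpa using gbk_integrable hb 1
  have hint2 : IntegrableOn (fun v : ℝ => v ^ 2 * Real.exp (-b * v ^ 2)) (Ioi 0) :=
    gbk_integrable hb 2
  have hint3 : IntegrableOn (fun v : ℝ => v ^ 3 * Real.exp (-b * v ^ 2)) (Ioi 0) :=
    gbk_integrable hb 3
  have hm0 := gbk_mom0 hb
  have hm1 := gbk_mom1 hb
  have hm2 := gbk_mom2 hb
  have hm3 := gbk_mom3 hb
  rw [hsqrtb] at hm0 hm2
  have hbinv : 1 / (2 * b) = a ^ 2 := by rw [hb_def]; field_simp
  have hbinv2 : 1 / (2 * b ^ 2) = 2 * a ^ 4 := by rw [hb_def]; field_simp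
  rw [hbinv] at hm1
  rw [hbinv2] at hm3
  have hm2' : ∫ v in Ioi (0:ℝ), v ^ 2 * Real.exp (-b * v ^ 2) = c * a ^ 2 / 2 := by
    rw [hm2, hb_def]; field_simp; ring
  -- ρ
  have hρ : ρp = (α / c) * (c / 2) + (β / c) * a ^ 2 := by
    rw [hρp]
    rw [MeasureTheory.setIntegral_congr_fun measurableSet_Ioi (fun v _ => hf' v)]
    rw [MeasureTheory.integral_add ((hint0.const_mul _)) ((hint1.const_mul _)),
      integral_const_mul, integral_const_mul, hm0, hm1]
  have hq : qp = (α / c) * a ^ 2 + (β / c) * (c * a ^ 2 / 2) := by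
    rw [hqp]
    have : ∀ v ∈ Ioi (0:ℝ), v * f v
        = (α / c) * (v * Real.exp (-b * v ^ 2)) + (β / c) * (v ^ 2 * Real.exp (-b * v ^ 2)) := by
      intro v _; rw [hf' v]; ring
    rw [MeasureTheory.setIntegral_congr_fun measurableSet_Ioi this]
    rw [MeasureTheory.integral_add ((hint1.const_mul _)) ((hint2.const_mul _)),
      integral_const_mul, integral_const_mul, hm1, hm2']
  have hs : (∫ v in Ioi (0:ℝ), v ^ 2 * f v)
      = (α / c) * (c * a ^ 2 / 2) + (β / c) * (2 * a ^ 4) := by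
    have : ∀ v ∈ Ioi (0:ℝ), v ^ 2 * f v
        = (α / c) * (v ^ 2 * Real.exp (-b * v ^ 2)) + (β / c) * (v ^ 3 * Real.exp (-b * v ^ 2)) := by
      intro v _; rw [hf' v]; ring
    rw [MeasureTheory.setIntegral_congr_fun measurableSet_Ioi this]
    rw [MeasureTheory.integral_add ((hint2.const_mul _)) ((hint3.const_mul _)),
      integral_const_mul, integral_const_mul, hm2', hm3]
  have hs2_pos : 0 < Real.sqrt (2 * Real.pi) := Real.sqrt_pos.mpr (by positivity)
  have hs2_sq : Real.sqrt (2 * Real.pi) ^ 2 = 2 * Real.pi :=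
    Real.sq_sqrt (by positivity)
  have hπ2 : Real.pi - 2 ≠ 0 := by
    have := Real.pi_gt_three; linarith
  have hc_ne : c ≠ 0 := ne_of_gt hc_pos
  refine ⟨?_, ?_, ?_⟩
  · rw [hρ, hc_eq]
    field_simp
  · rw [hq, hc_eq]
    field_simp
  · have h2π : Real.sqrt 2 ^ 2 * Real.sqrt Real.pi ^ 2 = 2 * Real.pi := by
      rw [Real.sq_sqrt (by norm_num : (0:ℝ) ≤ 2), Real.sq_sqrt Real.pi_pos.le]
    rw [hs, hρ, hq, hc_eq]
    field_simp
    linear_combination (-(a * β)) * hs2_sq
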